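/- For every p ∈ [0,1], the maximum over all 3-hat strategies (g₁, g₂) of the win probability in the 3-hat game with parameter p equals 3p² − 6p³ + 8p⁴ − 6p⁵ + 2p⁶ (so the same strategy is optimal for every p). -/
import Mathlib
open MeasureTheory ENNReal Finset

noncomputable def bern (p : ℝ) : Measure Bool :=
  ENNReal.ofReal p • Measure.dirac true + ENNReal.ofReal (1 - p) • Measure.dirac false

instance (p : ℝ) : IsFiniteMeasure (bern p) := by
  constructor
  simp [bern]

noncomputable def hat3 (p : ℝ) : Measure (Fin 3 → Bool) := Measure.pi fun _ => bern p

instance (p : ℝ) : IsFiniteMeasure (hat3 p) := by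
  unfold hat3; infer_instance

noncomputable def winProb3 (g₁ g₂ : (Fin 3 → Bool) → Fin 3) (p : ℝ) : ℝ :=
  (((hat3 p).prod (hat3 p)) {x : (Fin 3 → Bool) × (Fin 3 → Bool) |
    x.1 (g₁ x.2) = true ∧ x.2 (g₂ x.1) = true}).toReal

lemma bern_tt (p : ℝ) : bern p {true} = ENNReal.ofReal p := by
  simp [bern, Measure.dirac_apply]

lemma bern_ff (p : ℝ) : bern p {false} = ENNReal.ofReal (1 - p) := by
  simp [bern, Measure.dirac_apply]

lemma meas_fin_sum {α : Type*} [Fintype α] [MeasurableSpace α] [MeasurableSingletonClass α]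
    (μ : Measure α) (s : Finset α) : μ (s : Set α) = ∑ a ∈ s, μ {a} := by
  rw [show (s : Set α) = ⋃ a ∈ s, {a} by ext; simp]
  exact measure_biUnion_finset
    (by intro a _ b _ hab; simp [Function.onFun, Set.disjoint_singleton, hab])
    (fun a _ => measurableSet_singleton a)

noncomputable def w3 (p : ℝ) (x : Fin 3 → Bool) : ℝ := ∏ i : Fin 3, (if x i then p else 1 - p)

lemma w3_nonneg (p : ℝ) (hp0 : 0 ≤ p) (hp1 : p ≤ 1) (x : Fin 3 → Bool) : 0 ≤ w3 p x := by
  apply Finset.prod_nonneg; intro i _; cases x i <;> simp <;> linarith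

lemma hat3_single (p : ℝ) (x : Fin 3 → Bool) :
    hat3 p {x} = ∏ i : Fin 3, bern p {x i} := by
  rw [hat3, show ({x} : Set (Fin 3 → Bool)) = Set.pi Set.univ (fun i => {x i}) by
    ext y; simp [funext_iff, eq_comm]]
  rw [Measure.pi_pi]

lemma hat3_single' (p : ℝ) (hp0 : 0 ≤ p) (hp1 : p ≤ 1) (x : Fin 3 → Bool) :
    hat3 p {x} = ENNReal.ofReal (w3 p x) := by
  rw [hat3_single, w3, ENNReal.ofReal_prod_of_nonneg
    (by intro i _; cases x i <;> simp [hp0] <;> linarith)]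
  apply Finset.prod_congr rfl; intro i _
  cases h : x i <;> simp [bern_tt, bern_ff, h]

lemma winProb3_sum (g₁ g₂ : (Fin 3 → Bool) → Fin 3) (p : ℝ) (hp0 : 0 ≤ p) (hp1 : p ≤ 1) :
    winProb3 g₁ g₂ p =
      ∑ z ∈ Finset.univ.filter (fun z : (Fin 3 → Bool) × (Fin 3 → Bool) =>
          z.1 (g₁ z.2) = true ∧ z.2 (g₂ z.1) = true),
        w3 p z.1 * w3 p z.2 := by
  have hw : ∀ x : Fin 3 → Bool, 0 ≤ w3 p x := w3_nonneg p hp0 hp1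
  have hset : {x : (Fin 3 → Bool) × (Fin 3 → Bool) |
      x.1 (g₁ x.2) = true ∧ x.2 (g₂ x.1) = true} =
      ((Finset.univ.filter (fun z : (Fin 3 → Bool) × (Fin 3 → Bool) =>
          z.1 (g₁ z.2) = true ∧ z.2 (g₂ z.1) = true) : Finset _) : Set _) := by
    ext z; simp
  rw [winProb3, hset, meas_fin_sum]
  have hterm : ∀ z : (Fin 3 → Bool) × (Fin 3 → Bool),
      ((hat3 p).prod (hat3 p)) {z} = ENNReal.ofReal (w3 p z.1 * w3 p z.2) := by
    intro z
    rw [show ({z} : Set ((Fin 3 → Bool) × (Fin 3 → Bool))) = {z.1} ×ˢ {z.2} by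
      ext w; simp [Prod.ext_iff]]
    rw [Measure.prod_prod, hat3_single' p hp0 hp1, hat3_single' p hp0 hp1,
      ← ENNReal.ofReal_mul (hw _)]
  simp only [hterm]
  rw [ENNReal.toReal_sum (by intro a _; exact ENNReal.ofReal_ne_top)]
  apply Finset.sum_congr rfl; intro z _
  exact ENNReal.toReal_ofReal (mul_nonneg (hw _) (hw _))

def wt (x : Fin 3 → Bool) : ℕ :=
  (if x 0 then 1 else 0) + (if x 1 then 1 else 0) + (if x 2 then 1 else 0)

lemma wt_le (x : Fin 3 → Bool) : wt x ≤ 3 := by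
  unfold wt; split <;> split <;> split <;> omega

lemma w3_eq (p : ℝ) (x : Fin 3 → Bool) : w3 p x = p ^ wt x * (1 - p) ^ (3 - wt x) := by
  cases h0 : x 0 <;> cases h1 : x 1 <;> cases h2 : x 2 <;>
    · simp only [w3, wt, Fin.prod_univ_three, h0, h1, h2, if_true, if_false,
        Bool.false_eq_true, cond_true, cond_false]
      first
        | ring
        | norm_num

/-- number of winning pairs with prescribed weights -/
def cntPart (g₁ g₂ : (Fin 3 → Bool) → Fin 3) (a b : ℕ) : ℕ :=
  (Finset.univ.filter (fun z : (Fin 3 → Bool) × (Fin 3 → Bool) =>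
    z.1 (g₁ z.2) = true ∧ z.2 (g₂ z.1) = true ∧ wt z.1 = a ∧ wt z.2 = b)).card

lemma winProb3_eq (g₁ g₂ : (Fin 3 → Bool) → Fin 3) (p : ℝ) (hp0 : 0 ≤ p) (hp1 : p ≤ 1) :
    winProb3 g₁ g₂ p =
      ∑ ab ∈ Finset.range 4 ×ˢ Finset.range 4,
        (cntPart g₁ g₂ ab.1 ab.2 : ℝ) *
          (p ^ ab.1 * (1 - p) ^ (3 - ab.1) * (p ^ ab.2 * (1 - p) ^ (3 - ab.2))) := by
  rw [winProb3_sum g₁ g₂ p hp0 hp1]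
  rw [← Finset.sum_fiberwise_of_maps_to (g := fun z : (Fin 3 → Bool) × (Fin 3 → Bool) =>
      (wt z.1, wt z.2)) (t := Finset.range 4 ×ˢ Finset.range 4)
      (by intro z _; simp [Finset.mem_product, Nat.lt_succ_iff, wt_le])]
  apply Finset.sum_congr rfl
  intro ab hab
  have : ∀ z ∈ (Finset.univ.filter (fun z : (Fin 3 → Bool) × (Fin 3 → Bool) =>
      z.1 (g₁ z.2) = true ∧ z.2 (g₂ z.1) = true)).filter
        (fun z => (wt z.1, wt z.2) = ab),
      w3 p z.1 * w3 p z.2 =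
        p ^ ab.1 * (1 - p) ^ (3 - ab.1) * (p ^ ab.2 * (1 - p) ^ (3 - ab.2)) := by
    intro z hz
    simp only [Finset.mem_filter, Prod.ext_iff] at hz
    rw [w3_eq, w3_eq, hz.2.1, hz.2.2]
  rw [Finset.sum_congr rfl this, Finset.sum_const, nsmul_eq_mul]
  congr 1
  rw [Finset.filter_filter, cntPart]
  congr 1
  apply Finset.card_nbij id (by intro z hz; simp_all [Prod.ext_iff, and_assoc])
    (by intro z hz w hw h; exact h)
    (by intro z hz; exact ⟨z, by simp_all [Prod.ext_iff, and_assoc], rfl⟩)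


/-- bound counting over x for each fixed y -/
lemma partY (g₁ g₂ : (Fin 3 → Bool) → Fin 3) (a b M : ℕ)
    (hq : ∀ i : Fin 3,
      (Finset.univ.filter (fun x : Fin 3 → Bool => x i = true ∧ wt x = a)).card ≤ M) :
    cntPart g₁ g₂ a b ≤ (Finset.univ.filter (fun y : Fin 3 → Bool => wt y = b)).card * M := by
  rw [cntPart, Finset.card_filter, Fintype.sum_prod_type_right]
  calc ∑ y : Fin 3 → Bool, ∑ x : Fin 3 → Bool,
        (if x (g₁ y) = true ∧ y (g₂ x) = true ∧ wt x = a ∧ wt y = b then 1 else 0)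
      ≤ ∑ y : Fin 3 → Bool, (if wt y = b then M else 0) := by
        apply Finset.sum_le_sum
        intro y _
        by_cases hb : wt y = b
        · rw [if_pos hb]
          calc ∑ x : Fin 3 → Bool,
                (if x (g₁ y) = true ∧ y (g₂ x) = true ∧ wt x = a ∧ wt y = b then 1 else 0)
              ≤ ∑ x : Fin 3 → Bool, (if x (g₁ y) = true ∧ wt x = a then 1 else 0) := by
                apply Finset.sum_le_sum
                intro x _
                split <;> rename_i h
                · rw [if_pos ⟨h.1, h.2.2.1⟩]
                · exact Nat.zero_le _
            _ = (Finset.univ.filter (fun x : Fin 3 → Bool =>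
                  x (g₁ y) = true ∧ wt x = a)).card := (Finset.card_filter _ _).symm
            _ ≤ M := hq (g₁ y)
        · rw [if_neg hb]
          apply Nat.le_of_eq
          apply Finset.sum_eq_zero
          intro x _
          rw [if_neg (by tauto)]
    _ = (Finset.univ.filter (fun y : Fin 3 → Bool => wt y = b)).card * M := by
        rw [← Finset.sum_filter, Finset.sum_const, smul_eq_mul]

/-- bound counting over y for each fixed x -/
lemma partX (g₁ g₂ : (Fin 3 → Bool) → Fin 3) (a b M : ℕ)
    (hq : ∀ i : Fin 3,
      (Finset.univ.filter (fun y : Fin 3 → Bool => y i = true ∧ wt y = b)).card ≤ M) :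
    cntPart g₁ g₂ a b ≤ (Finset.univ.filter (fun x : Fin 3 → Bool => wt x = a)).card * M := by
  rw [cntPart, Finset.card_filter, Fintype.sum_prod_type]
  calc ∑ x : Fin 3 → Bool, ∑ y : Fin 3 → Bool,
        (if x (g₁ y) = true ∧ y (g₂ x) = true ∧ wt x = a ∧ wt y = b then 1 else 0)
      ≤ ∑ x : Fin 3 → Bool, (if wt x = a then M else 0) := by
        apply Finset.sum_le_sum
        intro x _
        by_cases ha : wt x = a
        · rw [if_pos ha]
          calc ∑ y : Fin 3 → Bool,
                (if x (g₁ y) = true ∧ y (g₂ x) = true ∧ wt x = a ∧ wt y = b then 1 else 0)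
              ≤ ∑ y : Fin 3 → Bool, (if y (g₂ x) = true ∧ wt y = b then 1 else 0) := by
                apply Finset.sum_le_sum
                intro y _
                split <;> rename_i h
                · rw [if_pos ⟨h.2.1, h.2.2.2⟩]
                · exact Nat.zero_le _
            _ = (Finset.univ.filter (fun y : Fin 3 → Bool =>
                  y (g₂ x) = true ∧ wt y = b)).card := (Finset.card_filter _ _).symm
            _ ≤ M := hq (g₂ x)
        · rw [if_neg ha]
          apply Nat.le_of_eq
          apply Finset.sum_eq_zero
          intro y _
          rw [if_neg (by tauto)]
    _ = (Finset.univ.filter (fun x : Fin 3 → Bool => wt x = a)).card * M := by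
        rw [← Finset.sum_filter, Finset.sum_const, smul_eq_mul]

def gstar (x : Fin 3 → Bool) : Fin 3 :=
  if x 0 then (if x 1 then 0 else (if x 2 then 1 else 0))
  else (if x 1 then 2 else (if x 2 then 1 else 0))

def bb (a b : ℕ) : ℕ := [[0,0,0,0],[0,3,3,1],[0,3,6,2],[0,1,2,1]].getD a [] |>.getD b 0

lemma cntPart_gstar : ∀ a < 4, ∀ b < 4, cntPart gstar gstar a b = bb a b := by decide

lemma cntPart_le (g₁ g₂ : (Fin 3 → Bool) → Fin 3) :
    ∀ a < 4, ∀ b < 4, cntPart g₁ g₂ a b ≤ bb a b := by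
  intro a ha b hb
  interval_cases a <;> interval_cases b
  · exact le_trans (partY g₁ g₂ 0 0 0 (by decide)) (by norm_num [bb])
  · exact le_trans (partY g₁ g₂ 0 1 0 (by decide)) (by norm_num [bb])
  · exact le_trans (partY g₁ g₂ 0 2 0 (by decide)) (by norm_num [bb])
  · exact le_trans (partY g₁ g₂ 0 3 0 (by decide)) (by norm_num [bb])
  · exact le_trans (partX g₁ g₂ 1 0 0 (by decide)) (by norm_num [bb])
  · exact le_trans (partY g₁ g₂ 1 1 1 (by decide)) (le_of_eq (by decide))
  · exact le_trans (partY g₁ g₂ 1 2 1 (by decide)) (le_of_eq (by decide))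
  · exact le_trans (partY g₁ g₂ 1 3 1 (by decide)) (le_of_eq (by decide))
  · exact le_trans (partX g₁ g₂ 2 0 0 (by decide)) (by norm_num [bb])
  · exact le_trans (partX g₁ g₂ 2 1 1 (by decide)) (le_of_eq (by decide))
  · exact le_trans (partY g₁ g₂ 2 2 2 (by decide)) (le_of_eq (by decide))
  · exact le_trans (partY g₁ g₂ 2 3 2 (by decide)) (le_of_eq (by decide))
  · exact le_trans (partX g₁ g₂ 3 0 0 (by decide)) (by norm_num [bb])
  · exact le_trans (partX g₁ g₂ 3 1 1 (by decide)) (le_of_eq (by decide))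
  · exact le_trans (partX g₁ g₂ 3 2 2 (by decide)) (le_of_eq (by decide))
  · exact le_trans (partY g₁ g₂ 3 3 1 (by decide)) (le_of_eq (by decide))

lemma winProb3_gstar (p : ℝ) (hp0 : 0 ≤ p) (hp1 : p ≤ 1) :
    winProb3 gstar gstar p =
      3 * p ^ 2 - 6 * p ^ 3 + 8 * p ^ 4 - 6 * p ^ 5 + 2 * p ^ 6 := by
  rw [winProb3_eq gstar gstar p hp0 hp1, Finset.sum_product]
  simp only [Finset.sum_range_succ, Finset.sum_range_zero]
  norm_num [show cntPart gstar gstar 0 0 = 0 by decide, show cntPart gstar gstar 0 1 = 0 by decide, show cntPart gstar gstar 0 2 = 0 by decide, show cntPart gstar gstar 0 3 = 0 by decide, show cntPart gstar gstar 1 0 = 0 by decide, show cntPart gstar gstar 1 1 = 3 by decide, show cntPart gstar gstar 1 2 = 3 by decide, show cntPart gstar gstar 1 3 = 1 by decide, show cntPart gstar gstar 2 0 = 0 by decide, show cntPart gstar gstar 2 1 = 3 by decide, show cntPart gstar gstar 2 2 = 6 by decide, show cntPart gstar gstar 2 3 = 2 by decide, show cntPart gstar gstar 3 0 = 0 by decide,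 show cntPart gstar gstar 3 1 = 1 by decide, show cntPart gstar gstar 3 2 = 2 by decide, show cntPart gstar gstar 3 3 = 1 by decide]
  ring

theorem three_hat_max (p : ℝ) (hp : p ∈ Set.Icc (0 : ℝ) 1) :
    IsGreatest
      (Set.range fun g : ((Fin 3 → Bool) → Fin 3) × ((Fin 3 → Bool) → Fin 3) =>
        winProb3 g.1 g.2 p)
      (3 * p ^ 2 - 6 * p ^ 3 + 8 * p ^ 4 - 6 * p ^ 5 + 2 * p ^ 6) := by
  obtain ⟨hp0, hp1⟩ := hp
  constructor
  · exact ⟨(gstar, gstar), winProb3_gstar p hp0 hp1⟩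
  · rintro r ⟨g, rfl⟩
    rw [← winProb3_gstar p hp0 hp1]
    show winProb3 g.1 g.2 p ≤ winProb3 gstar gstar p
    rw [winProb3_eq g.1 g.2 p hp0 hp1, winProb3_eq gstar gstar p hp0 hp1]
    apply Finset.sum_le_sum
    intro ab hab
    simp only [Finset.mem_product, Finset.mem_range] at hab
    have hcc : cntPart g.1 g.2 ab.1 ab.2 ≤ cntPart gstar gstar ab.1 ab.2 := by
      rw [cntPart_gstar _ hab.1 _ hab.2]
      exact cntPart_le _ _ _ hab.1 _ hab.2
    have hq : (0:ℝ) ≤ 1 - p := by linarith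
    have hnonneg : 0 ≤ p ^ ab.1 * (1 - p) ^ (3 - ab.1) * (p ^ ab.2 * (1 - p) ^ (3 - ab.2)) := by
      positivity
    exact mul_le_mul_of_nonneg_right (Nat.cast_le.2 hcc) hnonneg
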